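/- Let τ > 0, θ > 0, n ∈ ℕ with n ≥ 1, and let W : Fin n → ℝ with W_j > 0 for all j and ∑_j W_j > θ, and let t : Fin n → ℝ be arbitrary input times. Define the nLIF membrane potential u(s) := ∑_{j : t_j ≤ s} W_j · (1 − exp(−(s − t_j)/τ)). Then there exists a unique s* ∈ ℝ with u(s*) = θ; moreover u(s) < θ for all s < s*. -/

import Mathlib

open Real Finset
open Filter

/-- For an nLIF neuron with `τ > 0`, threshold `θ > 0`, at least one input,
strictly positive weights summing above threshold, and arbitrary input spike times `t`,
the membrane potential `u(s) = ∑_{j : t j ≤ s} W j * (1 - exp (-(s - t j) / τ))` crosses the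
threshold at a unique time `s*`, and `u(s) < θ` for every `s < s*`. -/
theorem nLIF_positive_weights_unique_spike_time
    (τ θ : ℝ) (hτ : 0 < τ) (hθ : 0 < θ) (n : ℕ) (hn : 1 ≤ n)
    (W : Fin n → ℝ) (hW : ∀ j, 0 < W j) (hsum : θ < ∑ j, W j)
    (t : Fin n → ℝ) :
    ∃ s : ℝ,
      (∑ j ∈ Finset.univ.filter (fun j => t j ≤ s),
        W j * (1 - Real.exp (-(s - t j) / τ))) = θ ∧
      (∀ s' : ℝ,
        (∑ j ∈ Finset.univ.filter (fun j => t j ≤ s'),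
          W j * (1 - Real.exp (-(s' - t j) / τ))) = θ → s' = s) ∧
      (∀ s' : ℝ, s' < s →
        (∑ j ∈ Finset.univ.filter (fun j => t j ≤ s'),
          W j * (1 - Real.exp (-(s' - t j) / τ))) < θ) := by
  set g : Fin n → ℝ → ℝ := fun j s => W j * max 0 (1 - Real.exp (-(s - t j) / τ)) with hg
  set u : ℝ → ℝ := fun s => ∑ j, g j s with hu
  -- rewrite filtered sum
  have hrw : ∀ s : ℝ, (∑ j ∈ Finset.univ.filter (fun j => t j ≤ s),
      W j * (1 - Real.exp (-(s - t j) / τ))) = u s := by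
    intro s
    rw [hu, Finset.sum_filter]
    refine Finset.sum_congr rfl fun j _ => ?_
    by_cases h : t j ≤ s
    · simp only [h, if_true, hg]
      congr 1
      rw [max_eq_right]
      have he : Real.exp (-(s - t j) / τ) ≤ 1 := by
        rw [← Real.exp_zero]
        apply Real.exp_le_exp.mpr
        have h1 : -(s - t j) / τ ≤ 0 := div_nonpos_of_nonpos_of_nonneg (by linarith) hτ.le
        linarith
      linarith
    · simp only [h, if_false, hg]
      have hlt : s < t j := lt_of_not_ge h
      have he : 1 < Real.exp (-(s - t j) / τ) := by
        rw [← Real.exp_zero]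
        apply Real.exp_lt_exp.mpr
        exact div_pos (by linarith) hτ
      rw [max_eq_left (by linarith), mul_zero]
  -- monotonicity of each g j
  have hgmono : ∀ j, Monotone (g j) := by
    intro j a b hab
    apply mul_le_mul_of_nonneg_left _ (hW j).le
    apply max_le_max le_rfl
    have : Real.exp (-(b - t j) / τ) ≤ Real.exp (-(a - t j) / τ) := by
      apply Real.exp_le_exp.mpr
      rw [neg_div, neg_div, neg_le_neg_iff]
      exact (div_le_div_iff_of_pos_right hτ).mpr (by linarith)
    linarith
  have hmono : Monotone u := fun a b hab =>
    Finset.sum_le_sum fun j _ => hgmono j hab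
  -- strict monotonicity once positive
  have hstrict : ∀ a b : ℝ, a < b → 0 < u a → u a < u b := by
    intro a b hab hpos
    obtain ⟨j, hj⟩ : ∃ j, 0 < g j a := by
      by_contra hc
      push_neg at hc
      have : u a ≤ 0 := Finset.sum_nonpos fun j _ => hc j
      linarith
    have htja : t j < a := by
      by_contra hc
      push_neg at hc
      have he : 1 ≤ Real.exp (-(a - t j) / τ) := by
        rw [← Real.exp_zero]
        apply Real.exp_le_exp.mpr
        exact div_nonneg (by linarith) hτ.le
      have : g j a = 0 := by
        simp only [hg]; rw [max_eq_left (by linarith), mul_zero]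
      linarith
    have hjstrict : g j a < g j b := by
      simp only [hg]
      apply mul_lt_mul_of_pos_left _ (hW j)
      have hea : Real.exp (-(a - t j) / τ) < 1 := by
        rw [← Real.exp_zero]
        apply Real.exp_lt_exp.mpr
        exact div_neg_of_neg_of_pos (by linarith) hτ
      have heb : Real.exp (-(b - t j) / τ) < Real.exp (-(a - t j) / τ) := by
        apply Real.exp_lt_exp.mpr
        rw [neg_div, neg_div, neg_lt_neg_iff]
        exact (div_lt_div_iff_of_pos_right hτ).mpr (by linarith)
      rw [max_eq_right (by linarith), max_eq_right (by linarith)]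
      linarith
    exact Finset.sum_lt_sum (fun i _ => hgmono i hab.le) ⟨j, Finset.mem_univ j, hjstrict⟩
  -- continuity
  have hcont : Continuous u := by
    apply continuous_finset_sum
    intro j _
    exact continuous_const.mul (continuous_const.max
      (continuous_const.sub (Real.continuous_exp.comp
        ((continuous_id.sub continuous_const).neg.div_const τ))))
  -- u = 0 at the earliest spike time
  haveI : NeZero n := ⟨by omega⟩
  have hne : (Finset.univ : Finset (Fin n)).Nonempty := Finset.univ_nonempty
  set s₀ : ℝ := Finset.univ.inf' hne t with hs₀
  have hu0 : u s₀ = 0 := by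
    apply Finset.sum_eq_zero
    intro j _
    have hle : s₀ ≤ t j := Finset.inf'_le _ (Finset.mem_univ j)
    have he : 1 ≤ Real.exp (-(s₀ - t j) / τ) := by
      rw [← Real.exp_zero]
      apply Real.exp_le_exp.mpr
      exact div_nonneg (by linarith) hτ.le
    simp only [hg]; rw [max_eq_left (by linarith), mul_zero]
  -- limit at infinity
  have htend : Tendsto u atTop (nhds (∑ j, W j)) := by
    apply tendsto_finset_sum
    intro j _
    have h1 : Tendsto (fun s : ℝ => -(s - t j) / τ) atTop atBot := by
      apply Tendsto.atBot_div_const hτ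
      have : Tendsto (fun s : ℝ => t j + -s) atTop atBot :=
        tendsto_atBot_add_const_left _ _ tendsto_neg_atTop_atBot
      refine this.congr fun s => by ring
    have h2 : Tendsto (fun s : ℝ => Real.exp (-(s - t j) / τ)) atTop (nhds 0) :=
      Real.tendsto_exp_atBot.comp h1
    have h3 : Tendsto (fun s : ℝ => max 0 (1 - Real.exp (-(s - t j) / τ))) atTop
        (nhds (max 0 (1 - 0))) := tendsto_const_nhds.max (tendsto_const_nhds.sub h2)
    have h4 := h3.const_mul (W j)
    simpa only [hg, sub_zero, max_eq_right zero_le_one, mul_one] using h4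
  obtain ⟨s₁, hs₁θ, hs₁ge⟩ : ∃ s₁, θ < u s₁ ∧ s₀ ≤ s₁ := by
    have := (htend.eventually (eventually_gt_nhds hsum)).and (eventually_ge_atTop s₀)
    exact this.exists
  -- IVT
  have hθmem : θ ∈ Set.Icc (u s₀) (u s₁) := by
    rw [hu0]; exact ⟨hθ.le, hs₁θ.le⟩
  obtain ⟨s, hsmem, hseq⟩ := intermediate_value_Icc hs₁ge hcont.continuousOn hθmem
  have huniq : ∀ s' : ℝ, u s' = θ → s' = s := by
    intro s' h'
    rcases lt_trichotomy s' s with h | h | h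
    · have := hstrict s' s h (by rw [h']; exact hθ)
      rw [h', hseq] at this; exact absurd this (lt_irrefl θ)
    · exact h
    · have := hstrict s s' h (by rw [hseq]; exact hθ)
      rw [h', hseq] at this; exact absurd this (lt_irrefl θ)
  refine ⟨s, ?_, ?_, ?_⟩
  · rw [hrw]; exact hseq
  · intro s' h'; rw [hrw] at h'; exact huniq s' h'
  · intro s' hlt
    rw [hrw]
    rcases lt_or_eq_of_le (hmono hlt.le) with h | h
    · rw [hseq] at h; exact h
    · rw [hseq] at h
      exact absurd (huniq s' h) (ne_of_lt hlt)
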